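/- arXiv:2505.15943 — 2 statements merged into one kernel-verified Lean document; each statement's English description precedes it below -/
import Mathlib

section
/- There exists a constant C_A > 0 such that for all z ∈ ℂ with |z| ≥ 2 and all t ∈ [0, 2π], g_A(-(z + |z|^{-1/2} e^{it})) ≤ C_A · g_A(-z), where g_A(w) = exp(-(2/3) Re w^{3/2}) via the principal branch. -/
open Complex


/-- real part of w^(3/2) is invariant under conjugation. -/
lemma re_cpow_conj' (w : ℂ) :
    (((starRingEnd ℂ) w) ^ ((3:ℂ)/2)).re = (w ^ ((3:ℂ)/2)).re := by
  by_cases h : w.arg = Real.pi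
  · have hw : (starRingEnd ℂ) w = w := by
      rw [Complex.arg_eq_pi_iff] at h
      apply Complex.ext <;> simp [h.2]
    rw [hw]
  · rw [Complex.conj_cpow _ _ h]
    have h32 : (starRingEnd ℂ) ((3:ℂ)/2) = (3:ℂ)/2 := by
      have : ((3:ℂ)/2) = ((3/2 : ℝ) : ℂ) := by norm_num
      rw [this, Complex.conj_ofReal]
    rw [h32, Complex.conj_re]

/-- the "upper half plane" version of w -/
noncomputable def upC (w : ℂ) : ℂ := ⟨w.re, |w.im|⟩

lemma upC_im_nonneg (w : ℂ) : 0 ≤ (upC w).im := abs_nonneg _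

lemma upC_abs (w : ℂ) : ‖upC w‖ = ‖w‖ := by
  simp [Complex.norm_def, Complex.normSq_apply, upC, sq_abs, ← pow_two]

lemma upC_re_cpow (w : ℂ) : ((upC w) ^ ((3:ℂ)/2)).re = (w ^ ((3:ℂ)/2)).re := by
  rcases le_or_gt 0 w.im with h | h
  · have : upC w = w := by
      apply Complex.ext <;> simp [upC, _root_.abs_of_nonneg h]
    rw [this]
  · have : upC w = (starRingEnd ℂ) w := by
      apply Complex.ext <;> simp [upC, _root_.abs_of_neg h]
    rw [this, re_cpow_conj']

lemma upC_dist (a b : ℂ) : ‖upC a - upC b‖ ≤ ‖a - b‖ := by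
  rw [Complex.norm_def, Complex.norm_def]
  apply Real.sqrt_le_sqrt
  simp only [Complex.normSq_apply, Complex.sub_re, Complex.sub_im, upC]
  have h1 : (|a.im| - |b.im|)^2 ≤ (a.im - b.im)^2 := by
    have := abs_abs_sub_abs_le_abs_sub a.im b.im
    have h2 : |a.im - b.im| ^ 2 = (a.im - b.im)^2 := sq_abs _
    nlinarith [abs_nonneg (|a.im| - |b.im|), abs_nonneg (a.im - b.im), _root_.sq_abs (|a.im| - |b.im|), _root_.sq_abs (a.im-b.im)]
  nlinarith [sq_nonneg (a.re - b.re)]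

/-- Key estimate: for w1, w2 in the closed upper half plane,
|Re w1^{3/2} - Re w2^{3/2}| ≤ |w1-w2| √|w1| + |w2| |w1-w2| / √|w1|. -/
lemma re_cpow_diff_bound {w1 w2 : ℂ} (h1 : w1 ≠ 0) (h2 : w2 ≠ 0)
    (hi1 : 0 ≤ w1.im) (hi2 : 0 ≤ w2.im) :
    |(w1 ^ ((3:ℂ)/2)).re - (w2 ^ ((3:ℂ)/2)).re| ≤
      ‖w1 - w2‖ * Real.sqrt (‖w1‖)
        + ‖w2‖ * ‖w1 - w2‖ / Real.sqrt (‖w1‖) := by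
  set s1 := w1 ^ ((1:ℂ)/2) with hs1def
  set s2 := w2 ^ ((1:ℂ)/2) with hs2def
  have hsq1 : s1 * s1 = w1 := by
    rw [hs1def, ← Complex.cpow_add _ _ h1]
    norm_num
  have hsq2 : s2 * s2 = w2 := by
    rw [hs2def, ← Complex.cpow_add _ _ h2]
    norm_num
  have habs1 : ‖s1‖ = Real.sqrt (‖w1‖) := by
    rw [← hsq1, norm_mul, Real.sqrt_mul_self (norm_nonneg s1)]
  have habs2 : ‖s2‖ = Real.sqrt (‖w2‖) := by
    rw [← hsq2, norm_mul, Real.sqrt_mul_self (norm_nonneg s2)]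
  -- signs of s1, s2 : both in closed first quadrant
  have quadrant : ∀ w : ℂ, w ≠ 0 → 0 ≤ w.im → 0 ≤ (w ^ ((1:ℂ)/2)).re ∧ 0 ≤ (w ^ ((1:ℂ)/2)).im := by
    intro w hw hiw
    rw [Complex.cpow_def_of_ne_zero hw]
    have himl : (Complex.log w * ((1:ℂ)/2)).im = w.arg / 2 := by
      simp [Complex.mul_im, Complex.log_im]
      ring
    have harg0 : 0 ≤ w.arg := Complex.arg_nonneg_iff.mpr hiw
    have hargpi : w.arg ≤ Real.pi := Complex.arg_le_pi w
    constructor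
    · rw [Complex.exp_re, himl]
      apply mul_nonneg (le_of_lt (Real.exp_pos _))
      apply Real.cos_nonneg_of_mem_Icc
      constructor
      · linarith [Real.pi_pos]
      · linarith
    · rw [Complex.exp_im, himl]
      apply mul_nonneg (le_of_lt (Real.exp_pos _))
      apply Real.sin_nonneg_of_nonneg_of_le_pi
      · linarith
      · linarith [Real.pi_pos]
  obtain ⟨hre1, him1⟩ := quadrant w1 h1 hi1
  obtain ⟨hre2, him2⟩ := quadrant w2 h2 hi2
  -- |s1 + s2| ≥ |s1|
  have hsum : ‖s1‖ ≤ ‖s1 + s2‖ := by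
    rw [Complex.norm_def, Complex.norm_def]
    apply Real.sqrt_le_sqrt
    simp only [Complex.normSq_apply, Complex.add_re, Complex.add_im]
    nlinarith [mul_nonneg hre1 hre2, mul_nonneg him1 him2]
  have hs1pos : 0 < ‖s1‖ := by
    rw [habs1]
    exact Real.sqrt_pos.mpr (norm_pos_iff.mpr h1)
  have hsumne : s1 + s2 ≠ 0 := by
    intro h
    rw [h, norm_zero] at hsum
    linarith
  have hdiff : s1 - s2 = (w1 - w2) / (s1 + s2) := by
    rw [eq_div_iff hsumne]
    linear_combination hsq1 - hsq2
  -- cpow 3/2 = w * w^{1/2}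
  have h32 : ∀ w : ℂ, w ≠ 0 → w ^ ((3:ℂ)/2) = w * w ^ ((1:ℂ)/2) := by
    intro w hw
    have : (3:ℂ)/2 = 1 + 1/2 := by norm_num
    rw [this, Complex.cpow_add _ _ hw, Complex.cpow_one]
  rw [h32 w1 h1, h32 w2 h2, ← hs1def, ← hs2def]
  have hkey : w1 * s1 - w2 * s2 = (w1 - w2) * s1 + w2 * (s1 - s2) := by ring
  calc |(w1 * s1).re - (w2 * s2).re| = |(w1 * s1 - w2 * s2).re| := by rw [Complex.sub_re]
    _ ≤ ‖w1 * s1 - w2 * s2‖ := Complex.abs_re_le_norm _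
    _ = ‖(w1 - w2) * s1 + w2 * (s1 - s2)‖ := by rw [hkey]
    _ ≤ ‖(w1 - w2) * s1‖ + ‖w2 * (s1 - s2)‖ := norm_add_le _ _
    _ ≤ ‖w1 - w2‖ * Real.sqrt (‖w1‖)
        + ‖w2‖ * ‖w1 - w2‖ / Real.sqrt (‖w1‖) := by
        rw [norm_mul, norm_mul, habs1, hdiff, norm_div, mul_div_assoc]
        have hd : ‖w1 - w2‖ / ‖s1 + s2‖
            ≤ ‖w1 - w2‖ / Real.sqrt (‖w1‖) := by
          exact div_le_div_of_nonneg_left (norm_nonneg _) (habs1 ▸ hs1pos) (habs1 ▸ hsum)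
        exact add_le_add le_rfl (mul_le_mul_of_nonneg_left hd (norm_nonneg _))

/-- g_A(w) = exp(-(2/3) Re w^{3/2}), principal branch. -/
noncomputable def gA (w : ℂ) : ℝ := Real.exp (-(2/3) * (w ^ ((3:ℂ)/2)).re)

/-- there exists C_A > 0 such that for all |z| ≥ 2 and t ∈ [0,2π],
g_A(-(z + |z|^{-1/2} e^{it})) ≤ C_A g_A(-z). -/
theorem gA_circle_bound :
    ∃ C > 0, ∀ (z : ℂ) (t : ℝ), 2 ≤ ‖z‖ → t ∈ Set.Icc (0:ℝ) (2 * Real.pi) →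
      gA (-(z + ((‖z‖ ^ (-(1:ℝ)/2) : ℝ) : ℂ) * Complex.exp ((t:ℂ) * Complex.I)))
        ≤ C * gA (-z) := by
  refine ⟨Real.exp 2, Real.exp_pos 2, ?_⟩
  intro z t hz _
  set R := ‖z‖ with hRdef
  have hRpos : (0:ℝ) < R := by linarith
  set δ : ℝ := R ^ (-(1:ℝ)/2) with hδdef
  set S := Real.sqrt R with hSdef
  have hSpos : 0 < S := Real.sqrt_pos.mpr hRpos
  have hS2 : S * S = R := Real.mul_self_sqrt hRpos.le
  have hS1 : 1 ≤ S := by nlinarith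
  have hδeq : δ = 1 / S := by
    rw [hδdef, hSdef, show (-(1:ℝ)/2) = -(1/2 : ℝ) by norm_num,
      Real.rpow_neg hRpos.le, ← Real.sqrt_eq_rpow, one_div]
  have hδpos : 0 < δ := by rw [hδeq]; positivity
  have hδ1 : δ ≤ 1 := by rw [hδeq]; rw [div_le_one hSpos]; exact hS1
  set w1 : ℂ := -(z + ((δ : ℝ) : ℂ) * Complex.exp ((t:ℂ) * Complex.I)) with hw1
  set w2 : ℂ := -z with hw2
  have huabs : ‖((δ : ℝ) : ℂ) * Complex.exp ((t:ℂ) * Complex.I)‖ = δ := by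
    rw [norm_mul, Complex.norm_real, Complex.norm_exp_ofReal_mul_I, mul_one, Real.norm_eq_abs,
      abs_of_pos hδpos]
  have hdist : ‖w1 - w2‖ = δ := by
    have h : w1 - w2 = -(((δ : ℝ) : ℂ) * Complex.exp ((t:ℂ) * Complex.I)) := by
      rw [hw1, hw2]; ring
    rw [h, norm_neg, huabs]
  have habs2 : ‖w2‖ = R := by rw [hw2, norm_neg]
  have habs1_ge : R - δ ≤ ‖w1‖ := by
    have h := norm_add_le (z + ((δ : ℝ) : ℂ) * Complex.exp ((t:ℂ) * Complex.I))
      (-(((δ : ℝ) : ℂ) * Complex.exp ((t:ℂ) * Complex.I)))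
    simp only [add_neg_cancel_right, norm_neg, huabs] at h
    rw [hw1, norm_neg]
    linarith
  have habs1_le : ‖w1‖ ≤ R + δ := by
    rw [hw1, norm_neg]
    calc ‖z + ((δ : ℝ) : ℂ) * Complex.exp ((t:ℂ) * Complex.I)‖
        ≤ ‖z‖ + ‖((δ : ℝ) : ℂ) * Complex.exp ((t:ℂ) * Complex.I)‖ :=
          norm_add_le _ _
      _ = R + δ := by rw [huabs, hRdef]
  have habs1_pos : 0 < ‖w1‖ := by linarith
  have hw1ne : w1 ≠ 0 := by
    intro h; rw [h, norm_zero] at habs1_pos; exact lt_irrefl _ habs1_pos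
  have hw2ne : w2 ≠ 0 := by
    intro h; rw [h, norm_zero] at habs2; linarith
  -- upper-half-plane versions
  have hu1ne : upC w1 ≠ 0 := by
    intro h
    have := upC_abs w1
    rw [h, norm_zero] at this
    linarith [this ▸ habs1_pos]
  have hu2ne : upC w2 ≠ 0 := by
    intro h
    have := upC_abs w2
    rw [h, norm_zero] at this
    rw [habs2] at this
    linarith
  have key := re_cpow_diff_bound hu1ne hu2ne (upC_im_nonneg w1) (upC_im_nonneg w2)
  rw [upC_re_cpow, upC_re_cpow, upC_abs, upC_abs, habs2] at key
  set d := ‖upC w1 - upC w2‖ with hddef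
  have hd : d ≤ δ := by rw [hddef, ← hdist]; exact upC_dist w1 w2
  have hdnn : 0 ≤ d := norm_nonneg _
  set A := Real.sqrt (‖w1‖) with hAdef
  have hApos : 0 < A := Real.sqrt_pos.mpr habs1_pos
  have hsqrt2 : Real.sqrt 2 * Real.sqrt 2 = 2 := Real.mul_self_sqrt (by norm_num)
  have hsqrt2nn : (0:ℝ) ≤ Real.sqrt 2 := Real.sqrt_nonneg 2
  have hA_le : A ≤ Real.sqrt 2 * S := by
    rw [hAdef, hSdef, ← Real.sqrt_mul (by norm_num : (0:ℝ) ≤ 2)]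
    apply Real.sqrt_le_sqrt
    nlinarith
  have hA_ge : S ≤ Real.sqrt 2 * A := by
    have h1 : Real.sqrt (R / 2) ≤ A := by
      rw [hAdef]
      apply Real.sqrt_le_sqrt
      nlinarith
    have hs2ne : Real.sqrt 2 ≠ 0 := by positivity
    have h2 : S = Real.sqrt 2 * Real.sqrt (R / 2) := by
      rw [hSdef, Real.sqrt_div hRpos.le]
      field_simp
    rw [h2]
    exact mul_le_mul_of_nonneg_left h1 hsqrt2nn
  have hdS : d * S ≤ 1 := by
    have := mul_le_mul_of_nonneg_right hd hSpos.le
    rw [hδeq, one_div, inv_mul_cancel₀ hSpos.ne'] at this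
    exact this
  have t1 : d * A ≤ Real.sqrt 2 := by
    calc d * A ≤ d * (Real.sqrt 2 * S) := by
          exact mul_le_mul_of_nonneg_left hA_le hdnn
      _ = Real.sqrt 2 * (d * S) := by ring
      _ ≤ Real.sqrt 2 * 1 := mul_le_mul_of_nonneg_left hdS hsqrt2nn
      _ = Real.sqrt 2 := mul_one _
  have t2 : R * d / A ≤ Real.sqrt 2 := by
    rw [div_le_iff₀ hApos]
    have hRd : R * d ≤ S := by
      calc R * d = S * (d * S) := by rw [← hS2]; ring
        _ ≤ S * 1 := mul_le_mul_of_nonneg_left hdS hSpos.le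
        _ = S := mul_one _
    calc R * d ≤ S := hRd
      _ ≤ Real.sqrt 2 * A := hA_ge
  have hkey3 : |(w1 ^ ((3:ℂ)/2)).re - (w2 ^ ((3:ℂ)/2)).re| ≤ 3 := by
    calc |(w1 ^ ((3:ℂ)/2)).re - (w2 ^ ((3:ℂ)/2)).re|
        ≤ d * A + R * d / A := key
      _ ≤ Real.sqrt 2 + Real.sqrt 2 := add_le_add t1 t2
      _ ≤ 3 := by nlinarith
  obtain ⟨hk1, hk2⟩ := abs_le.mp hkey3
  rw [gA, gA, ← Real.exp_add]
  apply Real.exp_le_exp.mpr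
  linarith
end

section
/- Let r > 1 and for q ∈ L²(ℝ₊, (1+x)^r dx) and z ∈ ℂ define ω(q,z) = ∫₀^∞ |q(x)| / √(1 + |x - z|) dx. Then there is a constant C_r > 0 such that ω(q,z) ≤ C_r ‖q‖_{A_r} Ω_r(z) for all q and z, where Ω_r(z) = (log(2+|z|)/(2+|z|))^{1/2} if 1 < r < 2, and Ω_r(z) = (2+|z|)^{-1/2} if r ≥ 2. -/
open MeasureTheory

open Set intervalIntegral

lemma int_one_add_rpow {p : ℝ} (hp : p < -1) :
    IntegrableOn (fun x : ℝ => (1+x) ^ p) (Set.Ioi 0) ∧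
    ∫ x in Set.Ioi (0:ℝ), (1+x) ^ p = -1/(p+1) := by
  have hp1 : p + 1 ≠ 0 := by linarith
  have hderiv : ∀ x ∈ Set.Ici (0:ℝ), HasDerivAt (fun x : ℝ => (1+x)^(p+1)/(p+1)) ((1+x)^p) x := by
    intro x hx
    have hb : (0:ℝ) < 1 + x := by simp at hx; linarith
    have h1 : HasDerivAt (fun x : ℝ => 1 + x) 1 x := by
      simpa using (hasDerivAt_id x).const_add 1
    have h2 := (h1.rpow_const (p := p+1) (Or.inl hb.ne'))
    have h3 := h2.div_const (p+1)
    convert h3 using 1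
    · rfl
    · rfl
    field_simp
    ring_nf
  have hpos : ∀ x ∈ Set.Ioi (0:ℝ), (0:ℝ) ≤ (1+x)^p := by
    intro x hx
    exact Real.rpow_nonneg (by simp at hx; linarith) _
  have htend : Filter.Tendsto (fun x : ℝ => (1+x)^(p+1)/(p+1)) Filter.atTop (nhds (0/(p+1))) := by
    apply Filter.Tendsto.div_const
    have h1 : Filter.Tendsto (fun x : ℝ => 1 + x) Filter.atTop Filter.atTop :=
      Filter.tendsto_atTop_add_const_left _ 1 Filter.tendsto_id
    have := (tendsto_rpow_neg_atTop (by linarith : (0:ℝ) < -(p+1))).comp h1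
    simpa [Function.comp_def] using this
  rw [zero_div] at htend
  have hcont : ContinuousWithinAt (fun x : ℝ => (1+x)^(p+1)/(p+1)) (Set.Ici 0) 0 :=
    (hderiv 0 Set.self_mem_Ici).continuousAt.continuousWithinAt
  have hderiv' : ∀ x ∈ Set.Ioi (0:ℝ), HasDerivAt (fun x : ℝ => (1+x)^(p+1)/(p+1)) ((1+x)^p) x :=
    fun x hx => hderiv x (Set.mem_Ici.2 (le_of_lt hx))
  constructor
  · exact integrableOn_Ioi_deriv_of_nonneg hcont hderiv' hpos htend
  · rw [integral_Ioi_of_hasDerivAt_of_nonneg hcont hderiv' hpos htend]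
    simp [Real.one_rpow]
    ring

lemma window_cont {s : ℝ} (b : ℝ) : Continuous (fun y : ℝ => (1 + |y - b|) ^ (-s)) := by
  apply Continuous.rpow_const
  · exact continuous_const.add (continuous_id.sub continuous_const).abs
  · intro x
    left
    positivity

lemma window_integrable {s : ℝ} (b M : ℝ) :
    IntegrableOn (fun y : ℝ => (1 + |y - b|) ^ (-s)) (Set.Icc (b-M) (b+M)) :=
  (window_cont b).continuousOn.integrableOn_Icc

lemma window_bound {s : ℝ} (hs1 : s < 1) (b M : ℝ) (hM : 0 ≤ M) :
    ∫ y in Set.Icc (b-M) (b+M), (1 + |y - b|) ^ (-s) ≤ 2 * (1+M)^(1-s) / (1-s) := by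
  have h1s : (0:ℝ) < 1 - s := by linarith
  -- right piece
  have hright : ∫ y in b..(b+M), (1 + |y - b|) ^ (-s) = ((1+M)^(1-s) - 1)/(1-s) := by
    have hcong : ∀ y ∈ Set.uIcc b (b+M), (1 + |y - b|) ^ (-s) = (1 + (y - b)) ^ (-s) := by
      intro y hy
      rw [Set.uIcc_of_le (by linarith)] at hy
      rw [abs_of_nonneg (by linarith [hy.1])]
    rw [intervalIntegral.integral_congr hcong]
    have hftc : ∀ y ∈ Set.uIcc b (b+M),
        HasDerivAt (fun y : ℝ => (1 + (y - b))^(1-s)/(1-s)) ((1 + (y - b)) ^ (-s)) y := by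
      intro y hy
      rw [Set.uIcc_of_le (by linarith)] at hy
      have hb : (0:ℝ) < 1 + (y - b) := by linarith [hy.1]
      have h1 : HasDerivAt (fun y : ℝ => 1 + (y - b)) 1 y := by
        simpa using ((hasDerivAt_id y).sub_const b).const_add 1
      have h2 := (h1.rpow_const (p := 1-s) (Or.inl hb.ne')).div_const (1-s)
      convert h2 using 1
      · rfl
      · rfl
      have he : 1 - s - 1 = -s := by ring
      rw [one_mul, he, mul_comm, mul_div_assoc, div_self h1s.ne', mul_one]
    have hint : IntervalIntegrable (fun y : ℝ => (1 + (y - b)) ^ (-s)) volume b (b+M) := by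
      apply ContinuousOn.intervalIntegrable
      apply ContinuousOn.rpow_const
      · exact (continuous_const.add (continuous_id.sub continuous_const)).continuousOn
      · intro y hy
        rw [Set.uIcc_of_le (by linarith)] at hy
        left
        have : (0:ℝ) < 1 + (y - b) := by linarith [hy.1]
        exact this.ne'
    rw [intervalIntegral.integral_eq_sub_of_hasDerivAt hftc hint]
    have h1 : b + M - b = M := by ring
    have h2 : b - b = (0:ℝ) := by ring
    rw [h1, h2, add_zero, Real.one_rpow]
    ring
  -- left piece
  have hleft : ∫ y in (b-M)..b, (1 + |y - b|) ^ (-s) = ((1+M)^(1-s) - 1)/(1-s) := by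
    have hcong : ∀ y ∈ Set.uIcc (b-M) b, (1 + |y - b|) ^ (-s) = (1 + (b - y)) ^ (-s) := by
      intro y hy
      rw [Set.uIcc_of_le (by linarith)] at hy
      rw [abs_of_nonpos (by linarith [hy.2]), neg_sub]
    rw [intervalIntegral.integral_congr hcong]
    have hftc : ∀ y ∈ Set.uIcc (b-M) b,
        HasDerivAt (fun y : ℝ => -((1 + (b - y))^(1-s)/(1-s))) ((1 + (b - y)) ^ (-s)) y := by
      intro y hy
      rw [Set.uIcc_of_le (by linarith)] at hy
      have hb : (0:ℝ) < 1 + (b - y) := by linarith [hy.2]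
      have h1 : HasDerivAt (fun y : ℝ => 1 + (b - y)) (-1) y := by
        simpa using ((hasDerivAt_id y).const_sub b).const_add 1
      have h2 := (((h1.rpow_const (p := 1-s) (Or.inl hb.ne'))).div_const (1-s)).neg
      convert h2 using 1
      · rfl
      · rfl
      · rfl
      have he : 1 - s - 1 = -s := by ring
      rw [he]
      field_simp
    have hint : IntervalIntegrable (fun y : ℝ => (1 + (b - y)) ^ (-s)) volume (b-M) b := by
      apply ContinuousOn.intervalIntegrable
      apply ContinuousOn.rpow_const
      · exact (continuous_const.add (continuous_const.sub continuous_id)).continuousOn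
      · intro y hy
        rw [Set.uIcc_of_le (by linarith)] at hy
        left
        have : (0:ℝ) < 1 + (b - y) := by linarith [hy.2]
        exact this.ne'
    rw [intervalIntegral.integral_eq_sub_of_hasDerivAt hftc hint]
    have h2 : b - (b - M) = M := by ring
    rw [sub_self, h2, add_zero, Real.one_rpow]
    ring
  -- combine
  have hsplit : Set.Icc (b-M) (b+M) = Set.Icc (b-M) b ∪ Set.Ioc b (b+M) :=
    (Set.Icc_union_Ioc_eq_Icc (by linarith) (by linarith)).symm
  have hdisj : Disjoint (Set.Icc (b-M) b) (Set.Ioc b (b+M)) := by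
    rw [Set.disjoint_left]
    intro y hy hy'
    exact absurd hy.2 (not_le.2 hy'.1)
  have hi1 : IntegrableOn (fun y : ℝ => (1 + |y - b|) ^ (-s)) (Set.Icc (b-M) b) :=
    (window_cont b).continuousOn.integrableOn_Icc
  have hi2 : IntegrableOn (fun y : ℝ => (1 + |y - b|) ^ (-s)) (Set.Ioc b (b+M)) :=
    ((window_cont b).continuousOn.integrableOn_Icc).mono_set Set.Ioc_subset_Icc_self
  rw [hsplit, setIntegral_union hdisj measurableSet_Ioc hi1 hi2]
  have e1 : ∫ y in Set.Icc (b-M) b, (1 + |y - b|) ^ (-s) = ((1+M)^(1-s) - 1)/(1-s) := by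
    rw [MeasureTheory.integral_Icc_eq_integral_Ioc, ← intervalIntegral.integral_of_le (by linarith : b - M ≤ b)]
    exact hleft
  have e2 : ∫ y in Set.Ioc b (b+M), (1 + |y - b|) ^ (-s) = ((1+M)^(1-s) - 1)/(1-s) := by
    rw [← intervalIntegral.integral_of_le (by linarith : b ≤ b + M)]
    exact hright
  rw [e1, e2]
  have hp : (0:ℝ) ≤ (1+M)^(1-s) := Real.rpow_nonneg (by linarith) _
  rw [← add_div, mul_div_assoc, two_mul, ← add_div]
  gcongr <;> linarith

lemma key_bound (r : ℝ) (hr : 1 < r) (z : ℂ) :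
    IntegrableOn (fun x : ℝ => (1+x)^(-r) / (1 + ‖(x:ℂ) - z‖)) (Set.Ioi 0) ∧
    ∫ x in Set.Ioi (0:ℝ), (1+x)^(-r) / (1 + ‖(x:ℂ) - z‖)
      ≤ 2 * (1/(r-1) + 4/(1 - max (2-r) (1/2))) / (2 + ‖z‖) := by
  set s : ℝ := max (2-r) (1/2) with hs_def
  have hs_half : (1:ℝ)/2 ≤ s := le_max_right _ _
  have hs1 : s < 1 := max_lt (by linarith) (by norm_num)
  have hs0 : (0:ℝ) ≤ s := by linarith
  have hrs : 2 ≤ r + s := by have := le_max_left (2-r) (1/2); simp only [← hs_def] at this; linarith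
  set D : ℝ := 1/(r-1) + 4/(1-s) with hD_def
  have hD : 0 < D := by
    have h1 : (0:ℝ) < 1/(r-1) := div_pos one_pos (by linarith)
    have h2 : (0:ℝ) < 4/(1-s) := div_pos (by norm_num) (by linarith)
    rw [hD_def]
    linarith
  set a : ℝ := ‖z‖ with ha_def
  have ha : 0 ≤ a := norm_nonneg z
  set b : ℝ := z.re with hb_def
  set M : ℝ := (2 + a)/2 with hM_def
  have hM1 : 1 ≤ M := by rw [hM_def]; linarith
  have hM0 : 0 < M := by linarith
  set φ : ℝ → ℝ := fun x => ‖(x:ℂ) - z‖ with hφ_def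
  have hφ_cont : Continuous φ := continuous_norm.comp (Complex.continuous_ofReal.sub continuous_const)
  have hφ0 : ∀ x, 0 ≤ φ x := fun x => norm_nonneg _
  set K : ℝ → ℝ := fun x => (1+x)^(-r) / (1 + φ x) with hK_def
  set ind : ℝ → ℝ :=
    fun x => Set.indicator (Set.Icc (b-M) (b+M)) (fun y => (1 + |y - b|) ^ (-s)) x with hind_def
  set bnd : ℝ → ℝ := fun x => (1/M) * (1+x)^(-r) + M^(-r) * ind x with hbnd_def
  have hind_nonneg : ∀ x, 0 ≤ ind x := by
    intro x
    apply Set.indicator_nonneg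
    intro y _
    positivity
  -- pointwise bound
  have hbound : ∀ x ∈ Set.Ioi (0:ℝ), K x ≤ bnd x := by
    intro x hx
    simp only [Set.mem_Ioi] at hx
    have hx1 : (0:ℝ) < 1 + x := by linarith
    have hrp : (0:ℝ) ≤ (1+x)^(-r) := Real.rpow_nonneg hx1.le _
    have hsum : 2 + a ≤ (1 + x) + (1 + φ x) := by
      have h1 : a ≤ x + φ x := by
        have : ‖z‖ ≤ ‖(x:ℂ)‖ + ‖(x:ℂ) - z‖ := by
          calc ‖z‖ = ‖(x:ℂ) - ((x:ℂ) - z)‖ := by ring_nf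
          _ ≤ ‖(x:ℂ)‖ + ‖(x:ℂ) - z‖ := norm_sub_le _ _
        simpa [ha_def, hφ_def, Complex.norm_real, abs_of_pos hx] using this
      linarith
    rcases le_or_gt M (1 + φ x) with h | h
    · -- case A
      have : K x ≤ (1/M) * (1+x)^(-r) := by
        rw [hK_def, one_div, inv_mul_eq_div]
        exact div_le_div_of_nonneg_left hrp hM0 h
      have h2 : 0 ≤ M^(-r) * ind x := mul_nonneg (Real.rpow_nonneg hM0.le _) (hind_nonneg x)
      rw [hbnd_def]
      dsimp only
      linarith
    · -- case B
      have hxM : M ≤ 1 + x := by linarith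
      have hxb : |x - b| ≤ φ x := by
        have : ((x:ℂ) - z).re = x - b := by simp [hb_def]
        calc |x - b| = |((x:ℂ) - z).re| := by rw [this]
        _ ≤ ‖(x:ℂ) - z‖ := Complex.abs_re_le_norm _
      have hmem : x ∈ Set.Icc (b-M) (b+M) := by
        have h1 : φ x ≤ M := by linarith [hφ0 x]
        have := abs_le.1 (hxb.trans h1)
        constructor <;> linarith [this.1, this.2]
      have hind_eq : ind x = (1 + |x - b|) ^ (-s) := Set.indicator_of_mem hmem _
      have h1 : (1+x)^(-r) ≤ M^(-r) := by
        apply Real.rpow_le_rpow_of_nonpos hM0 hxM (by linarith)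
      have h2 : (1 + φ x)⁻¹ ≤ (1 + |x - b|) ^ (-s) := by
        have hb1 : (1:ℝ) ≤ 1 + |x - b| := by linarith [abs_nonneg (x-b)]
        have h3 : (1 + |x - b|)^s ≤ (1 + |x - b|) := by
          calc (1 + |x - b|)^s ≤ (1 + |x - b|)^(1:ℝ) :=
            Real.rpow_le_rpow_of_exponent_le hb1 hs1.le
          _ = 1 + |x - b| := Real.rpow_one _
        have h4 : (1 + |x - b|)^s ≤ 1 + φ x := by linarith
        have h5 : (0:ℝ) < (1 + |x - b|)^s := Real.rpow_pos_of_pos (by positivity) _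
        calc (1 + φ x)⁻¹ ≤ ((1 + |x - b|)^s)⁻¹ := inv_anti₀ h5 h4
        _ = (1 + |x - b|) ^ (-s) := by rw [← Real.rpow_neg (by positivity)]
      have hK : K x ≤ M^(-r) * (1 + |x - b|) ^ (-s) := by
        rw [hK_def]
        dsimp only
        rw [div_eq_mul_inv]
        apply mul_le_mul h1 h2 (by positivity) (Real.rpow_nonneg hM0.le _)
      have h6 : 0 ≤ (1/M) * (1+x)^(-r) := by positivity
      rw [hbnd_def]
      dsimp only
      rw [hind_eq]
      linarith
  -- integrability of bnd
  have hbnd_int : IntegrableOn bnd (Set.Ioi 0) := by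
    apply Integrable.add
    · exact ((int_one_add_rpow (by linarith : -r < -1)).1.const_mul _)
    · apply Integrable.const_mul
      exact ((window_integrable b M).integrable_indicator measurableSet_Icc).integrableOn
  -- measurability of K
  have hK_meas : Measurable K := by
    apply Measurable.div
    · exact (measurable_const.add measurable_id).pow measurable_const
    · exact (continuous_const.add hφ_cont).measurable
  have hK_nonneg : ∀ x ∈ Set.Ioi (0:ℝ), 0 ≤ K x := by
    intro x hx
    simp only [Set.mem_Ioi] at hx
    have : (0:ℝ) ≤ (1+x)^(-r) := Real.rpow_nonneg (by linarith) _
    have h2 : (0:ℝ) < 1 + φ x := by linarith [hφ0 x]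
    positivity
  have hK_int : IntegrableOn K (Set.Ioi 0) := by
    apply Integrable.mono' hbnd_int hK_meas.aestronglyMeasurable
    apply (ae_restrict_iff' measurableSet_Ioi).2
    apply Filter.Eventually.of_forall
    intro x hx
    rw [Real.norm_of_nonneg (hK_nonneg x hx)]
    exact hbound x hx
  refine ⟨hK_int, ?_⟩
  -- the integral bound
  have step1 : ∫ x in Set.Ioi (0:ℝ), K x ≤ ∫ x in Set.Ioi (0:ℝ), bnd x :=
    setIntegral_mono_on hK_int hbnd_int measurableSet_Ioi hbound
  have step2 : ∫ x in Set.Ioi (0:ℝ), bnd x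
      = (1/M) * (1/(r-1)) + M^(-r) * ∫ x in Set.Ioi (0:ℝ), ind x := by
    rw [hbnd_def]
    rw [integral_add ((int_one_add_rpow (by linarith : -r < -1)).1.const_mul _)
      (((window_integrable b M).integrable_indicator measurableSet_Icc).integrableOn.const_mul _)]
    rw [MeasureTheory.integral_const_mul, MeasureTheory.integral_const_mul]
    have hval : ∫ x in Set.Ioi (0:ℝ), (1+x)^(-r) = 1/(r-1) := by
      rw [(int_one_add_rpow (by linarith : -r < -1)).2]
      have h : -r+1 = -(r-1) := by ring
      rw [h, div_neg, neg_div, neg_neg]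
    rw [hval]
  have step3 : ∫ x in Set.Ioi (0:ℝ), ind x ≤ 2 * (1+M)^(1-s) / (1-s) := by
    have hint : Integrable ind :=
      (window_integrable b M).integrable_indicator measurableSet_Icc
    calc ∫ x in Set.Ioi (0:ℝ), ind x ≤ ∫ x, ind x :=
      setIntegral_le_integral hint (Filter.Eventually.of_forall hind_nonneg)
    _ = ∫ y in Set.Icc (b-M) (b+M), (1 + |y - b|) ^ (-s) := integral_indicator measurableSet_Icc
    _ ≤ 2 * (1+M)^(1-s) / (1-s) := window_bound hs1 b M (by linarith)
  have hMr : (0:ℝ) ≤ M^(-r) := Real.rpow_nonneg hM0.le _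
  have h1s : (0:ℝ) < 1 - s := by linarith
  have hb1 : (1+M)^(1-s) ≤ 2 * M^(1-s) := by
    have e1 : (1+M)^(1-s) ≤ (2*M)^(1-s) :=
      Real.rpow_le_rpow (by linarith) (by linarith) (by linarith)
    have e2 : (2*M)^(1-s) = 2^(1-s) * M^(1-s) := Real.mul_rpow (by norm_num) hM0.le
    have e3 : (2:ℝ)^(1-s) ≤ 2 := by
      calc (2:ℝ)^(1-s) ≤ 2^(1:ℝ) := Real.rpow_le_rpow_of_exponent_le (by norm_num) (by linarith)
      _ = 2 := Real.rpow_one 2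
    have e4 : 2^(1-s) * M^(1-s) ≤ 2 * M^(1-s) :=
      mul_le_mul_of_nonneg_right e3 (Real.rpow_nonneg hM0.le _)
    linarith
  have hb2 : M^(-r) * M^(1-s) ≤ 1/M := by
    rw [← Real.rpow_add hM0]
    calc M ^ (-r + (1-s)) ≤ M ^ (-1:ℝ) :=
      Real.rpow_le_rpow_of_exponent_le hM1 (by linarith)
    _ = 1/M := by rw [Real.rpow_neg_one, one_div]
  have step4 : M^(-r) * (2 * (1+M)^(1-s) / (1-s)) ≤ (4/(1-s)) * (1/M) := by
    calc M^(-r) * (2 * (1+M)^(1-s) / (1-s)) ≤ M^(-r) * (2 * (2*M^(1-s)) / (1-s)) := by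
          apply mul_le_mul_of_nonneg_left _ hMr
          apply div_le_div_of_nonneg_right (by linarith) h1s.le
      _ = (4/(1-s)) * (M^(-r) * M^(1-s)) := by ring
      _ ≤ (4/(1-s)) * (1/M) := by
          apply mul_le_mul_of_nonneg_left hb2 (le_of_lt (div_pos (by norm_num) h1s))
  have hfin : ∫ x in Set.Ioi (0:ℝ), K x ≤ D * (1/M) := by
    have e5 : M^(-r) * (∫ x in Set.Ioi (0:ℝ), ind x) ≤ M^(-r) * (2 * (1+M)^(1-s) / (1-s)) :=
      mul_le_mul_of_nonneg_left step3 hMr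
    calc ∫ x in Set.Ioi (0:ℝ), K x ≤ ∫ x in Set.Ioi (0:ℝ), bnd x := step1
      _ = (1/M) * (1/(r-1)) + M^(-r) * ∫ x in Set.Ioi (0:ℝ), ind x := step2
      _ ≤ (1/M) * (1/(r-1)) + (4/(1-s)) * (1/M) := by linarith
      _ = D * (1/M) := by rw [hD_def]; ring
  calc ∫ x in Set.Ioi (0:ℝ), K x ≤ D * (1/M) := hfin
    _ = 2 * (1/(r-1) + 4/(1 - max (2-r) (1/2))) / (2 + a) := by
        rw [hD_def, hs_def]
        rw [hM_def]
        have : (0:ℝ) < 2 + a := by linarith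
        field_simp

/-- for r > 1 there is C_r > 0 with
ω(q,z) = ∫₀^∞ |q(x)|/√(1+|x-z|) dx ≤ C_r ‖q‖_{A_r} Ω_r(z), where
Ω_r(z) = (log(2+|z|)/(2+|z|))^{1/2} for 1 < r < 2 and Ω_r(z) = (2+|z|)^{-1/2} for r ≥ 2. -/
theorem omega_bound (r : ℝ) (hr : 1 < r) :
    ∃ C > 0, ∀ (q : ℝ → ℝ) (z : ℂ), Measurable q →
      IntegrableOn (fun x => q x ^ 2 * (1 + x) ^ r) (Set.Ioi 0) →
      (∫ x in Set.Ioi (0:ℝ), |q x| / Real.sqrt (1 + ‖(x:ℂ) - z‖))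
        ≤ C * (∫ x in Set.Ioi (0:ℝ), q x ^ 2 * (1 + x) ^ r) ^ ((1:ℝ)/2) *
          (if r < 2 then Real.sqrt (Real.log (2 + ‖z‖) / (2 + ‖z‖))
           else (2 + ‖z‖) ^ (-(1:ℝ)/2)) := by
  set D : ℝ := 1/(r-1) + 4/(1 - max (2-r) (1/2)) with hD_def
  have hs1 : max (2-r) (1/2:ℝ) < 1 := max_lt (by linarith) (by norm_num)
  have hD : 0 < D := by
    have h1 : (0:ℝ) < 1/(r-1) := div_pos one_pos (by linarith)
    have h2 : (0:ℝ) < 4/(1 - max (2-r) (1/2)) := div_pos (by norm_num) (by linarith)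
    rw [hD_def]; linarith
  have hlog2 : (0:ℝ) < Real.log 2 := Real.log_pos one_lt_two
  have hsl2 : (0:ℝ) < Real.sqrt (Real.log 2) := Real.sqrt_pos.2 hlog2
  set t : ℝ := (Real.sqrt (Real.log 2))⁻¹ with ht_def
  have ht0 : 0 ≤ t := by positivity
  have hsD : (0:ℝ) < Real.sqrt (2*D) := Real.sqrt_pos.2 (by linarith)
  refine ⟨Real.sqrt (2*D) * (1 + t), by positivity, ?_⟩
  intro q z hq hA
  set a : ℝ := ‖z‖ with ha_def
  have ha : 0 ≤ a := norm_nonneg z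
  have ha2 : (0:ℝ) < 2 + a := by linarith
  set φ : ℝ → ℝ := fun x => ‖(x:ℂ) - z‖ with hφ_def
  have hφ_cont : Continuous φ :=
    continuous_norm.comp (Complex.continuous_ofReal.sub continuous_const)
  have hφ0 : ∀ x, 0 ≤ φ x := fun x => norm_nonneg _
  have hφ1 : ∀ x, (0:ℝ) < 1 + φ x := fun x => by linarith [hφ0 x]
  set f : ℝ → ℝ := fun x => |q x| * Real.sqrt ((1+x)^r) with hf_def
  set g : ℝ → ℝ := fun x => Real.sqrt ((1+x)^(-r) / (1 + φ x)) with hg_def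
  set K : ℝ → ℝ := fun x => (1+x)^(-r) / (1 + φ x) with hK_def
  obtain ⟨hKint, hKbnd⟩ := key_bound r hr z
  have hKint : IntegrableOn K (Set.Ioi 0) := hKint
  have hKbnd : ∫ x in Set.Ioi (0:ℝ), K x ≤ 2 * D / (2 + a) := hKbnd
  have hK0 : ∀ x ∈ Set.Ioi (0:ℝ), 0 ≤ K x := by
    intro x hx
    simp only [Set.mem_Ioi] at hx
    exact div_nonneg (Real.rpow_nonneg (by linarith) _) (hφ1 x).le
  have hf_meas : Measurable f :=
    (hq.abs).mul (Real.continuous_sqrt.measurable.comp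
      ((measurable_const.add measurable_id).pow measurable_const))
  have hg_meas : Measurable g :=
    Real.continuous_sqrt.measurable.comp
      (((measurable_const.add measurable_id).pow measurable_const).div
        ((continuous_const.add hφ_cont).measurable))
  have hf0 : ∀ x, 0 ≤ f x := fun x => mul_nonneg (abs_nonneg _) (Real.sqrt_nonneg _)
  have hg0 : ∀ x, 0 ≤ g x := fun x => Real.sqrt_nonneg _
  -- pointwise identities on Ioi 0
  have hf2 : ∀ x ∈ Set.Ioi (0:ℝ), f x ^ 2 = q x ^ 2 * (1+x)^r := by
    intro x hx
    simp only [Set.mem_Ioi] at hx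
    rw [hf_def]
    dsimp only
    rw [mul_pow, sq_abs, Real.sq_sqrt (Real.rpow_nonneg (by linarith) _)]
  have hg2 : ∀ x ∈ Set.Ioi (0:ℝ), g x ^ 2 = K x := by
    intro x hx
    rw [hg_def]
    dsimp only
    rw [Real.sq_sqrt (hK0 x hx)]
  have hfg : ∀ x ∈ Set.Ioi (0:ℝ), |q x| / Real.sqrt (1 + φ x) = f x * g x := by
    intro x hx
    simp only [Set.mem_Ioi] at hx
    have hx1 : (0:ℝ) < 1 + x := by linarith
    rw [hf_def, hg_def]
    dsimp only
    rw [mul_assoc, ← Real.sqrt_mul (Real.rpow_nonneg hx1.le _)]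
    have : (1+x)^r * ((1+x)^(-r) / (1 + φ x)) = (1 + φ x)⁻¹ := by
      rw [mul_div_assoc', ← Real.rpow_add hx1]
      simp
    rw [this, Real.sqrt_inv, div_eq_mul_inv]
  -- Memℒp facts
  have haefg : (fun x => q x ^ 2 * (1+x)^r) =ᵐ[volume.restrict (Set.Ioi 0)] (fun x => f x ^ 2) :=
    (ae_restrict_iff' measurableSet_Ioi).2 (Filter.Eventually.of_forall fun x hx => (hf2 x hx).symm)
  have haeg : K =ᵐ[volume.restrict (Set.Ioi 0)] (fun x => g x ^ 2) :=
    (ae_restrict_iff' measurableSet_Ioi).2 (Filter.Eventually.of_forall fun x hx => (hg2 x hx).symm)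
  have hfA : Integrable (fun x => f x ^ 2) (volume.restrict (Set.Ioi 0)) := hA.congr haefg
  have hgA : Integrable (fun x => g x ^ 2) (volume.restrict (Set.Ioi 0)) := hKint.congr haeg
  have h2e : ENNReal.ofReal (2:ℝ) = 2 := by norm_num
  have hfL2 : MemLp f (ENNReal.ofReal (2:ℝ)) (volume.restrict (Set.Ioi 0)) := by
    rw [h2e]
    exact (memLp_two_iff_integrable_sq hf_meas.aestronglyMeasurable).2 hfA
  have hgL2 : MemLp g (ENNReal.ofReal (2:ℝ)) (volume.restrict (Set.Ioi 0)) := by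
    rw [h2e]
    exact (memLp_two_iff_integrable_sq hg_meas.aestronglyMeasurable).2 hgA
  have hpq : Real.HolderConjugate 2 2 := Real.HolderConjugate.two_two
  have H := integral_mul_le_Lp_mul_Lq_of_nonneg hpq
    (Filter.Eventually.of_forall hf0) (Filter.Eventually.of_forall hg0) hfL2 hgL2
  have hr2 : ∀ y : ℝ, y ^ (2:ℝ) = y ^ 2 := fun y => by
    rw [show (2:ℝ) = ((2:ℕ):ℝ) by norm_num, Real.rpow_natCast]
  set A : ℝ := ∫ x in Set.Ioi (0:ℝ), q x ^ 2 * (1+x)^r with hA_def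
  set J : ℝ := ∫ x in Set.Ioi (0:ℝ), K x with hJ_def
  have eqL : (∫ x in Set.Ioi (0:ℝ), |q x| / Real.sqrt (1 + ‖(x:ℂ) - z‖))
      = ∫ x in Set.Ioi (0:ℝ), f x * g x :=
    setIntegral_congr_fun measurableSet_Ioi (fun x hx => hfg x hx)
  have eqA : (∫ x in Set.Ioi (0:ℝ), f x ^ (2:ℝ)) = A := by
    rw [hA_def]
    exact setIntegral_congr_fun measurableSet_Ioi (fun x hx => by rw [hr2]; exact hf2 x hx)
  have eqJ : (∫ x in Set.Ioi (0:ℝ), g x ^ (2:ℝ)) = J := by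
    rw [hJ_def]
    exact setIntegral_congr_fun measurableSet_Ioi (fun x hx => by rw [hr2]; exact hg2 x hx)
  rw [eqL]
  have hA0 : 0 ≤ A := by
    rw [hA_def]
    apply setIntegral_nonneg measurableSet_Ioi
    intro x hx
    simp only [Set.mem_Ioi] at hx
    exact mul_nonneg (sq_nonneg _) (Real.rpow_nonneg (by linarith) _)
  have hJ0 : 0 ≤ J := setIntegral_nonneg measurableSet_Ioi hK0
  have H2 : (∫ x in Set.Ioi (0:ℝ), f x * g x) ≤ A ^ ((1:ℝ)/2) * J ^ ((1:ℝ)/2) := by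
    calc (∫ x in Set.Ioi (0:ℝ), f x * g x)
        ≤ (∫ x in Set.Ioi (0:ℝ), f x ^ (2:ℝ)) ^ ((1:ℝ)/2) *
          (∫ x in Set.Ioi (0:ℝ), g x ^ (2:ℝ)) ^ ((1:ℝ)/2) := H
      _ = A ^ ((1:ℝ)/2) * J ^ ((1:ℝ)/2) := by rw [eqA, eqJ]
  have hJb : J ^ ((1:ℝ)/2) ≤ Real.sqrt (2*D) / Real.sqrt (2+a) := by
    calc J ^ ((1:ℝ)/2) ≤ (2*D/(2+a)) ^ ((1:ℝ)/2) :=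
        Real.rpow_le_rpow hJ0 hKbnd (by norm_num)
      _ = Real.sqrt (2*D/(2+a)) := (Real.sqrt_eq_rpow _).symm
      _ = Real.sqrt (2*D) / Real.sqrt (2+a) := Real.sqrt_div (by linarith) _
  have hApow : (0:ℝ) ≤ A ^ ((1:ℝ)/2) := Real.rpow_nonneg hA0 _
  have hcore : Real.sqrt (2*D) / Real.sqrt (2+a)
      ≤ (Real.sqrt (2*D) * (1 + t)) *
        (if r < 2 then Real.sqrt (Real.log (2 + a) / (2 + a))
         else (2 + a) ^ (-(1:ℝ)/2)) := by
    have hsa : (0:ℝ) < Real.sqrt (2+a) := Real.sqrt_pos.2 ha2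
    split_ifs with hcase
    · -- r < 2 : log branch
      have hloga : Real.log 2 ≤ Real.log (2+a) := Real.log_le_log (by norm_num) (by linarith)
      have hlogan : (0:ℝ) ≤ Real.log (2+a) := by linarith
      have h1 : (1:ℝ) ≤ (1 + t) * Real.sqrt (Real.log 2) := by
        have : (1+t) * Real.sqrt (Real.log 2)
            = Real.sqrt (Real.log 2) + t * Real.sqrt (Real.log 2) := by ring
        rw [this, ht_def, inv_mul_cancel₀ hsl2.ne']
        linarith [hsl2.le]
      have h2 : (1:ℝ) ≤ (1 + t) * Real.sqrt (Real.log (2+a)) := by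
        calc (1:ℝ) ≤ (1 + t) * Real.sqrt (Real.log 2) := h1
          _ ≤ (1 + t) * Real.sqrt (Real.log (2+a)) :=
            mul_le_mul_of_nonneg_left (Real.sqrt_le_sqrt hloga) (by linarith)
      have h3 : Real.sqrt (2*D) ≤ Real.sqrt (2*D) * ((1 + t) * Real.sqrt (Real.log (2+a))) :=
        le_mul_of_one_le_right hsD.le h2
      calc Real.sqrt (2*D) / Real.sqrt (2+a)
          ≤ Real.sqrt (2*D) * ((1 + t) * Real.sqrt (Real.log (2+a))) / Real.sqrt (2+a) :=
            div_le_div_of_nonneg_right h3 hsa.le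
        _ = (Real.sqrt (2*D) * (1 + t)) * (Real.sqrt (Real.log (2+a)) / Real.sqrt (2+a)) := by
            ring
        _ = (Real.sqrt (2*D) * (1 + t)) * Real.sqrt (Real.log (2+a) / (2+a)) := by
            rw [Real.sqrt_div hlogan]
    · -- r ≥ 2 branch
      have he : (2 + a) ^ (-(1:ℝ)/2) = (Real.sqrt (2+a))⁻¹ := by
        rw [show (-(1:ℝ)/2) = -(1/2) by norm_num, Real.rpow_neg ha2.le, Real.sqrt_eq_rpow]
      rw [he]
      rw [div_eq_mul_inv]
      apply mul_le_mul_of_nonneg_right _ (by positivity)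
      exact le_mul_of_one_le_right hsD.le (by linarith)
  calc (∫ x in Set.Ioi (0:ℝ), f x * g x) ≤ A ^ ((1:ℝ)/2) * J ^ ((1:ℝ)/2) := H2
    _ ≤ A ^ ((1:ℝ)/2) * (Real.sqrt (2*D) / Real.sqrt (2+a)) :=
        mul_le_mul_of_nonneg_left hJb hApow
    _ ≤ A ^ ((1:ℝ)/2) * ((Real.sqrt (2*D) * (1 + t)) *
        (if r < 2 then Real.sqrt (Real.log (2 + a) / (2 + a))
         else (2 + a) ^ (-(1:ℝ)/2))) :=
        mul_le_mul_of_nonneg_left hcore hApow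
    _ = Real.sqrt (2*D) * (1 + t) * A ^ ((1:ℝ)/2) *
        (if r < 2 then Real.sqrt (Real.log (2 + a) / (2 + a))
         else (2 + a) ^ (-(1:ℝ)/2)) := by ring
end
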